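/- The polynomials f = X^4 + 8XY^3 and g = Y^3(X^3 − Y^3)^3 are algebraically independent over ℂ. -/

import Mathlib

open MvPolynomial

namespace TypeIIIGleasonAux

noncomputable def fP : MvPolynomial (Fin 2) ℂ := X 0 ^ 4 + 8 * X 0 * X 1 ^ 3
noncomputable def gP : MvPolynomial (Fin 2) ℂ := X 1 ^ 3 * (X 0 ^ 3 - X 1 ^ 3) ^ 3

lemma coeff_pderiv (i : Fin 2) (P : MvPolynomial (Fin 2) ℂ) (m : Fin 2 →₀ ℕ) :
    coeff m (pderiv i P) = ((m i : ℂ) + 1) * coeff (m + Finsupp.single i 1) P := by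
  induction P using MvPolynomial.induction_on' with
  | add p q hp hq => simp [hp, hq, mul_add]
  | monomial s a =>
    rw [pderiv_monomial, coeff_monomial, coeff_monomial]
    by_cases hs : s i = 0
    · have h1 : s ≠ m + Finsupp.single i 1 := by
        intro h
        apply absurd hs
        rw [h]
        simp
      rw [if_neg h1, hs]
      simp
    · by_cases h2 : s = m + Finsupp.single i 1
      · have h3 : s - Finsupp.single i 1 = m := by
          rw [h2]; ext j; simp [Finsupp.tsub_apply, Finsupp.single_apply]
        rw [if_pos h3, if_pos h2, h2]
        simp [mul_comm]
      · have h3 : s - Finsupp.single i 1 ≠ m := by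
          intro h
          apply h2
          ext j
          have := congrArg (fun t => t j) h
          by_cases hj : i = j
          · subst hj
            simp [Finsupp.tsub_apply, Finsupp.single_apply] at this ⊢
            omega
          · simp [Finsupp.tsub_apply, Finsupp.single_apply, hj] at this ⊢
            omega
        rw [if_neg h3, if_neg h2, mul_zero]

lemma eq_C_of_totalDegree_eq_zero (p : MvPolynomial (Fin 2) ℂ)
    (h : p.totalDegree = 0) : p = C (coeff 0 p) := by
  ext m
  by_cases hm : m = 0
  · simp [hm]
  · rw [coeff_C, if_neg (Ne.symm hm)]
    by_contra hc
    have hmem : m ∈ p.support := by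
      simpa [mem_support_iff] using hc
    have := (totalDegree_eq_zero_iff (Fin 2) p).mp h m hmem
    exact hm (Finsupp.ext fun j => this j)

lemma eq_C_of_pderiv_eq_zero (p : MvPolynomial (Fin 2) ℂ)
    (h0 : pderiv 0 p = 0) (h1 : pderiv 1 p = 0) : p = C (coeff 0 p) := by
  have key : ∀ (i : Fin 2) (m : Fin 2 →₀ ℕ), coeff (m + Finsupp.single i 1) p = 0 := by
    intro i m
    have h : pderiv i p = 0 := by fin_cases i <;> assumption
    have := coeff_pderiv i p m
    rw [h, coeff_zero] at this
    have hne : ((m i : ℂ) + 1) ≠ 0 := Nat.cast_add_one_ne_zero (m i)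
    exact (mul_eq_zero.mp this.symm).resolve_left hne
  ext m
  by_cases hm : m = 0
  · simp [hm]
  · rw [coeff_C, if_neg (Ne.symm hm)]
    have : ∃ i, m i ≠ 0 := by
      by_contra hc
      push_neg at hc
      exact hm (Finsupp.ext fun j => hc j)
    obtain ⟨i, hi⟩ := this
    have hm' : m = (m - Finsupp.single i 1) + Finsupp.single i 1 := by
      ext j
      by_cases hj : i = j
      · subst hj; simp [Finsupp.tsub_apply, Finsupp.single_apply]; omega
      · simp [Finsupp.tsub_apply, Finsupp.single_apply, hj]
    rw [hm']
    exact key i _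

lemma totalDegree_pderiv_lt (i : Fin 2) (p : MvPolynomial (Fin 2) ℂ)
    (h : 0 < p.totalDegree) : (pderiv i p).totalDegree < p.totalDegree := by
  rw [totalDegree, Finset.sup_lt_iff (by exact_mod_cast h)]
  intro m hm
  rw [mem_support_iff, coeff_pderiv] at hm
  have hc : coeff (m + Finsupp.single i 1) p ≠ 0 := by
    intro hz; rw [hz, mul_zero] at hm; exact hm rfl
  have hmem := le_totalDegree (p := p) (mem_support_iff.mpr hc)
  have hsum : ((m + Finsupp.single i 1).sum fun _ e => e)
      = (m.sum fun _ e => e) + 1 := by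
    rw [Finsupp.sum_add_index' (fun _ => rfl) (fun _ _ _ => rfl)]
    simp
  omega

lemma chain_rule (v : Fin 2 → MvPolynomial (Fin 2) ℂ) (P : MvPolynomial (Fin 2) ℂ)
    (i : Fin 2) :
    pderiv i (aeval v P) =
      aeval v (pderiv 0 P) * pderiv i (v 0) + aeval v (pderiv 1 P) * pderiv i (v 1) := by
  induction P using MvPolynomial.induction_on with
  | C a => simp
  | add p q hp hq => simp only [map_add, Derivation.map_add, hp, hq]; ring
  | mul_X p j hp =>
    rw [map_mul, aeval_X, pderiv_mul, hp, pderiv_mul, pderiv_mul]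
    fin_cases j <;>
      simp [pderiv_X, Pi.single_apply] <;> ring

end TypeIIIGleasonAux

/-- The Gleason generators `f = X^4 + 8XY^3` and `g = Y^3 (X^3 - Y^3)^3` for
Type III weight enumerators are algebraically independent over ℂ. -/
theorem typeIII_gleason_algebraicIndependent :
    AlgebraicIndependent ℂ
      ![(X 0 : MvPolynomial (Fin 2) ℂ) ^ 4 + 8 * X 0 * X 1 ^ 3,
        (X 1 : MvPolynomial (Fin 2) ℂ) ^ 3 * (X 0 ^ 3 - X 1 ^ 3) ^ 3] := by
  classical
  rw [algebraicIndependent_iff]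
  intro P hP
  set v : Fin 2 → MvPolynomial (Fin 2) ℂ :=
    ![(X 0 : MvPolynomial (Fin 2) ℂ) ^ 4 + 8 * X 0 * X 1 ^ 3,
      (X 1 : MvPolynomial (Fin 2) ℂ) ^ 3 * (X 0 ^ 3 - X 1 ^ 3) ^ 3] with hv
  have hv0 : v 0 = X 0 ^ 4 + 8 * X 0 * X 1 ^ 3 := rfl
  have hv1 : v 1 = X 1 ^ 3 * (X 0 ^ 3 - X 1 ^ 3) ^ 3 := rfl
  have h8 : ∀ i : Fin 2, pderiv i (8 : MvPolynomial (Fin 2) ℂ) = 0 := fun i => by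
    rw [(map_ofNat (C : ℂ →+* MvPolynomial (Fin 2) ℂ) 8).symm, pderiv_C]
  -- the four partial derivatives
  have hd00 : pderiv 0 (v 0) = 4 * X 0 ^ 3 + 8 * X 1 ^ 3 := by
    rw [hv0, (map_ofNat (C : ℂ →+* MvPolynomial (Fin 2) ℂ) 8).symm]
    simp [pderiv_mul, pderiv_pow, pderiv_X, Pi.single_apply, pderiv_C_mul, map_ofNat, h8]
    ring
  have hd10 : pderiv 1 (v 0) = 24 * X 0 * X 1 ^ 2 := by
    rw [hv0, (map_ofNat (C : ℂ →+* MvPolynomial (Fin 2) ℂ) 8).symm]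
    simp [pderiv_mul, pderiv_pow, pderiv_X, Pi.single_apply, pderiv_C_mul, map_ofNat, h8]
    ring
  have hd01 : pderiv 0 (v 1) = 9 * X 0 ^ 2 * X 1 ^ 3 * (X 0 ^ 3 - X 1 ^ 3) ^ 2 := by
    rw [hv1]
    simp [pderiv_mul, pderiv_pow, pderiv_X, Pi.single_apply]
    ring
  have hd11 : pderiv 1 (v 1) =
      3 * X 1 ^ 2 * (X 0 ^ 3 - X 1 ^ 3) ^ 3 - 9 * X 1 ^ 5 * (X 0 ^ 3 - X 1 ^ 3) ^ 2 := by
    rw [hv1]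
    simp [pderiv_mul, pderiv_pow, pderiv_X, Pi.single_apply]
    ring
  -- the Jacobian is nonzero
  have hJ : pderiv 0 (v 0) * pderiv 1 (v 1) - pderiv 1 (v 0) * pderiv 0 (v 1) ≠ 0 := by
    intro hz
    have := congrArg (eval (![2, 1] : Fin 2 → ℂ)) hz
    rw [hd00, hd10, hd01, hd11] at this
    simp only [map_sub, map_add, map_mul, map_pow, map_ofNat, eval_X, map_zero] at this
    norm_num [Matrix.cons_val_zero, Matrix.cons_val_one, Matrix.head_cons] at this
  -- induction on total degree
  suffices H : ∀ n, ∀ Q : MvPolynomial (Fin 2) ℂ, Q.totalDegree ≤ n → aeval v Q = 0 → Q = 0 by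
    exact H _ P le_rfl hP
  intro n
  induction n with
  | zero =>
    intro Q hd hQ
    have h0 : Q.totalDegree = 0 := Nat.le_zero.mp hd
    have hC := TypeIIIGleasonAux.eq_C_of_totalDegree_eq_zero Q h0
    rw [hC, aeval_C] at hQ
    have hc0 : coeff 0 Q = 0 := by
      rwa [show (algebraMap ℂ (MvPolynomial (Fin 2) ℂ)) = (C : ℂ →+* _) from rfl,
        C_eq_zero] at hQ
    rw [hC, hc0, map_zero]
  | succ n ih =>
    intro Q hd hQ
    by_cases h0 : Q.totalDegree = 0
    · exact ih Q (h0 ▸ Nat.zero_le n) hQ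
    · have key : ∀ i, aeval v (pderiv 0 Q) * pderiv i (v 0)
          + aeval v (pderiv 1 Q) * pderiv i (v 1) = 0 := by
        intro i
        rw [← TypeIIIGleasonAux.chain_rule v Q i, hQ, map_zero]
      have hA : aeval v (pderiv 0 Q) *
          (pderiv 0 (v 0) * pderiv 1 (v 1) - pderiv 1 (v 0) * pderiv 0 (v 1)) = 0 := by
        linear_combination (key 0) * pderiv 1 (v 1) - (key 1) * pderiv 0 (v 1)
      have hB : aeval v (pderiv 1 Q) *
          (pderiv 0 (v 0) * pderiv 1 (v 1) - pderiv 1 (v 0) * pderiv 0 (v 1)) = 0 := by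
        linear_combination (key 1) * pderiv 0 (v 0) - (key 0) * pderiv 1 (v 0)
      have hA0 := (mul_eq_zero.mp hA).resolve_right hJ
      have hB0 := (mul_eq_zero.mp hB).resolve_right hJ
      have d0 : (pderiv 0 Q).totalDegree ≤ n := by
        have := TypeIIIGleasonAux.totalDegree_pderiv_lt 0 Q (Nat.pos_of_ne_zero h0)
        omega
      have d1 : (pderiv 1 Q).totalDegree ≤ n := by
        have := TypeIIIGleasonAux.totalDegree_pderiv_lt 1 Q (Nat.pos_of_ne_zero h0)
        omega
      have z0 := ih _ d0 hA0
      have z1 := ih _ d1 hB0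
      have hC := TypeIIIGleasonAux.eq_C_of_pderiv_eq_zero Q z0 z1
      exact absurd (by rw [hC]; exact totalDegree_C _) h0
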